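/- Let S be a nonempty set equipped with an involution σ : S → S (σ ∘ σ = id), H_ℂ a complex Hilbert space whose inner product ⟪·,·⟫ is linear in the first argument, and Φ : S → H_ℂ. Define f(s) := ⟪f, Φ s⟫ for f ∈ H_ℂ and k(s,s₀) := ⟪Φ s₀, Φ s⟫, and assume k(s, σ s₀) = k(s₀, σ s) for all s, s₀ ∈ S. Let H := {f ∈ H_ℂ : ∀ s ∈ S, f(σ s) = conj(f(s))}, a real subspace of H_ℂ. Then for every s₀ ∈ S the elements u := (1/2)·(Φ s₀ + Φ(σ s₀)) and w := (i/2)·(Φ s₀ − Φ(σ s₀)) belong to H, and for every f ∈ H: Re(f(s₀)) = Re ⟪f, u⟫ and Im(f(s₀)) = Re ⟪f, w⟫. Moreover, for all s ∈ S: ⟪u, Φ s⟫ − i·⟪w, Φ s⟫ = k(s, s₀) and ⟪u, Φ s⟫ + i·⟪w, Φ s⟫ = k(s, σ s₀). -/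

import Mathlib

open ComplexConjugate

/-- **From the kernel symmetry condition to the symmetric complex/real RKHS
(iii ⇒ i, ii).**  The paper's inner product `⟪a, b⟫` is linear in the first argument,
i.e. equals Mathlib's `inner b a`; evaluation is `f(s) = ⟪f, Φ s⟫ = inner ℂ (Φ s) f`, and
`k(s,s₀) = ⟪Φ s₀, Φ s⟫ = inner ℂ (Φ s) (Φ s₀)`.  Under `k(s, σ s₀) = k(s₀, σ s)`, the
elements `u = ½(Φ s₀ + Φ (σ s₀))` and `w = (i/2)(Φ s₀ − Φ (σ s₀))` satisfy the symmetry
condition, represent the real and imaginary parts of evaluation at `s₀` on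
`H = {f : ∀ s, f(σ s) = conj (f s)}` w.r.t. the real inner product `Re ⟪·,·⟫`, and
`⟪u, Φ s⟫ − i ⟪w, Φ s⟫ = k(s, s₀)`, `⟪u, Φ s⟫ + i ⟪w, Φ s⟫ = k(s, σ s₀)`. -/
theorem stmt13 {S : Type*} [Nonempty S] (σ : S → S) (hσ : ∀ s, σ (σ s) = s)
    {Hc : Type*} [NormedAddCommGroup Hc] [InnerProductSpace ℂ Hc] [CompleteSpace Hc]
    (Φ : S → Hc)
    (k : S → S → ℂ) (hk : ∀ s s₀, k s s₀ = inner ℂ (Φ s) (Φ s₀))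
    (hsym : ∀ s s₀, k s (σ s₀) = k s₀ (σ s))
    (s₀ : S) (u w : Hc)
    (hu : u = (1 / 2 : ℂ) • (Φ s₀ + Φ (σ s₀)))
    (hw : w = (Complex.I / 2) • (Φ s₀ - Φ (σ s₀))) :
    (∀ s, (inner ℂ (Φ (σ s)) u : ℂ) = conj (inner ℂ (Φ s) u : ℂ)) ∧
    (∀ s, (inner ℂ (Φ (σ s)) w : ℂ) = conj (inner ℂ (Φ s) w : ℂ)) ∧
    (∀ f : Hc, (∀ s, (inner ℂ (Φ (σ s)) f : ℂ) = conj (inner ℂ (Φ s) f : ℂ)) →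
      (inner ℂ (Φ s₀) f : ℂ).re = (inner ℂ u f : ℂ).re ∧
      (inner ℂ (Φ s₀) f : ℂ).im = (inner ℂ w f : ℂ).re) ∧
    (∀ s, (inner ℂ (Φ s) u : ℂ) - Complex.I * (inner ℂ (Φ s) w : ℂ) = k s s₀) ∧
    (∀ s, (inner ℂ (Φ s) u : ℂ) + Complex.I * (inner ℂ (Φ s) w : ℂ) = k s (σ s₀)) :=  by
  have hconj : ∀ a b : S, conj (k a b) = k b a := by
    intro a b; rw [hk, hk, inner_conj_symm]
  have hss : ∀ a b, k a b = k (σ b) (σ a) := by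
    intro a b
    have h := hsym a (σ b)
    rwa [hσ] at h
  have hiu : ∀ s, (inner ℂ (Φ s) u : ℂ) = (1/2) * (k s s₀ + k s (σ s₀)) := by
    intro s
    rw [hu, inner_smul_right, inner_add_right, ← hk, ← hk]
  have hiw : ∀ s, (inner ℂ (Φ s) w : ℂ) = (Complex.I/2) * (k s s₀ - k s (σ s₀)) := by
    intro s
    rw [hw, inner_smul_right, inner_sub_right, ← hk, ← hk]
  have hc2 : (starRingEnd ℂ) 2 = 2 := by
    rw [Complex.ext_iff]; simp
  refine ⟨?_, ?_, ?_, ?_, ?_⟩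
  · intro s
    rw [hiu, hiu, map_mul, map_add, hconj, hconj]
    have h1 : k s₀ s = k (σ s) (σ s₀) := hss s₀ s
    have h2 : k (σ s₀) s = k (σ s) s₀ := by
      have h := hss (σ s₀) s; rwa [hσ] at h
    rw [h1, h2]
    simp [map_div₀, hc2]
    ring
  · intro s
    rw [hiw, hiw, map_mul, map_sub, hconj, hconj]
    have h1 : k s₀ s = k (σ s) (σ s₀) := hss s₀ s
    have h2 : k (σ s₀) s = k (σ s) s₀ := by
      have h := hss (σ s₀) s; rwa [hσ] at h
    rw [h1, h2]
    simp [map_div₀, Complex.conj_I, hc2]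
    ring
  · intro f hf
    have hz := hf s₀
    have h1 : (inner ℂ u f : ℂ) = (1/2) * (inner ℂ (Φ s₀) f + conj (inner ℂ (Φ s₀) f)) := by
      rw [hu, inner_smul_left, inner_add_left, hz]
      simp [map_div₀, hc2]
    have h2 : (inner ℂ w f : ℂ) = (-Complex.I/2) * (inner ℂ (Φ s₀) f - conj (inner ℂ (Φ s₀) f)) := by
      rw [hw, inner_smul_left, inner_sub_left, hz]
      simp [map_div₀, Complex.conj_I, hc2]
    rw [h1, h2]
    set z : ℂ := inner ℂ (Φ s₀) f
    constructor
    · simp [Complex.mul_re, Complex.add_re, Complex.add_im]; ring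
    · simp [Complex.mul_re, Complex.sub_re, Complex.sub_im, Complex.div_re,
        Complex.div_im, Complex.I_re, Complex.I_im]
      ring
  · intro s
    rw [hiu, hiw]
    have : Complex.I * Complex.I = -1 := Complex.I_mul_I
    field_simp
    ring_nf
    rw [Complex.I_sq]
    ring
  · intro s
    rw [hiu, hiw]
    field_simp
    ring_nf
    rw [Complex.I_sq]
    ring
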